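/- For every integer n ≥ 0, the polynomial identity (T+1)^{4n+2} + (T−1)^{4n+2} = 2(T²+1) · Σ_{q=0}^{n} C(n+q, n−q) · (4T)^{2q} · (T²−1)^{2n−2q} holds in the polynomial ring ℤ[T] (equivalently, for all real T). -/

import Mathlib

open Polynomial Finset

private lemma chooseId (a k : ℕ) :
    (a+2).choose (k+2) + a.choose k = a.choose (k+2) + 2 * ((a+1).choose (k+1)) := by
  have h1 : (a+2).choose (k+2) = (a+1).choose (k+1) + (a+1).choose (k+2) :=
    Nat.choose_succ_succ (a+1) (k+1)
  have h2 : (a+1).choose (k+2) = a.choose (k+1) + a.choose (k+2) :=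
    Nat.choose_succ_succ a (k+1)
  have h3 : (a+1).choose (k+1) = a.choose k + a.choose (k+1) :=
    Nat.choose_succ_succ a k
  omega

section Generic

variable {R : Type*} [CommRing R]

private noncomputable def fsum (z w : R) (n : ℕ) : R :=
  ∑ q ∈ Finset.range (n+1), ((n+q).choose (n-q) : R) * z^q * w^(n-q)

private lemma pointwise (z w : R) (n q : ℕ) (hq : q ≤ n + 2) :
    ((n+2+q).choose (n+2-q) : R) * z^q * w^(n+2-q)
      + (if q ≤ n then ((n+q).choose (n-q) : R) * z^q * w^(n+2-q) else 0)
    = (if 1 ≤ q then ((n+q).choose (n+2-q) : R) * z^q * w^(n+2-q) else 0)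
      + (if q ≤ n+1 then 2*((n+1+q).choose (n+1-q) : R) * z^q * w^(n+2-q) else 0) := by
  rcases Nat.eq_or_lt_of_le hq with h2 | h2
  · -- q = n + 2
    subst h2
    rw [if_neg (by omega), if_pos (by omega), if_neg (by omega)]
    have e : n + 2 - (n + 2) = 0 := by omega
    rw [e, Nat.choose_zero_right, Nat.choose_zero_right]
  · rcases Nat.lt_or_ge n q with h1 | h1
    · -- q = n + 1
      have hq1 : q = n + 1 := by omega
      subst hq1
      rw [if_neg (by omega), if_pos (by omega), if_pos le_rfl]
      have e1 : n + 2 - (n+1) = 1 := by omega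
      have e2 : n + 1 - (n+1) = 0 := by omega
      rw [e1, e2]
      have c1 : (n+2+(n+1)).choose 1 = 2*n+3 := by rw [Nat.choose_one_right]; omega
      have c2 : (n+(n+1)).choose 1 = 2*n+1 := by rw [Nat.choose_one_right]; omega
      rw [c1, c2, Nat.choose_zero_right]
      push_cast
      ring
    · -- q ≤ n
      obtain ⟨k, hk⟩ : ∃ k, n = q + k := ⟨n - q, by omega⟩
      subst hk
      rw [if_pos (by omega : q ≤ q + k), if_pos (by omega : q ≤ q + k + 1)]
      have e1 : q + k + 2 - q = k + 2 := by omega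
      have e2 : q + k - q = k := by omega
      have e3 : q + k + 1 - q = k + 1 := by omega
      rw [e1, e2, e3]
      rcases Nat.eq_zero_or_pos q with h0 | h0
      · subst h0
        rw [if_neg (by omega)]
        simp only [Nat.zero_add, Nat.add_zero, Nat.choose_self, Nat.cast_one]
        ring
      · rw [if_pos (by omega : 1 ≤ q)]
        have key := chooseId (2*q+k) k
        have e4 : q + k + 2 + q = 2*q+k + 2 := by omega
        have e5 : q + k + q = 2*q+k := by omega
        have e6 : q + k + 1 + q = 2*q+k+1 := by omega
        rw [e4, e5, e6]
        have keyR : ((2*q+k+2).choose (k+2) : R) + ((2*q+k).choose k : R)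
            = ((2*q+k).choose (k+2) : R) + 2 * ((2*q+k+1).choose (k+1) : R) := by
          exact_mod_cast congrArg (Nat.cast : ℕ → R) key
        linear_combination (z^q * w^(k+2)) * keyR

private lemma fsum_rec (z w : R) (n : ℕ) :
    fsum z w (n+2) + w^2 * fsum z w n = (z + 2*w) * fsum z w (n+1) := by
  have hB : w^2 * fsum z w n
      = ∑ q ∈ Finset.range (n+3),
          (if q ≤ n then ((n+q).choose (n-q) : R) * z^q * w^(n+2-q) else 0) := by
    rw [Finset.sum_range_succ, Finset.sum_range_succ, if_neg (by omega), if_neg (by omega),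
      add_zero, add_zero, fsum, Finset.mul_sum]
    refine Finset.sum_congr rfl fun q hq => ?_
    have hqn : q ≤ n := by simpa [Nat.lt_succ_iff] using hq
    rw [if_pos hqn]
    have e : n + 2 - q = (n - q) + 2 := by omega
    rw [e, pow_add]
    ring
  have hC : z * fsum z w (n+1)
      = ∑ q ∈ Finset.range (n+3),
          (if 1 ≤ q then ((n+q).choose (n+2-q) : R) * z^q * w^(n+2-q) else 0) := by
    rw [Finset.sum_range_succ' _ (n+2), if_neg (by omega), add_zero, fsum, Finset.mul_sum]
    refine Finset.sum_congr rfl fun q hq => ?_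
    rw [if_pos (by omega)]
    have e1 : n + 2 - (q+1) = n + 1 - q := by omega
    have e2 : n + (q+1) = n + 1 + q := by omega
    rw [e1, e2]
    ring
  have hD : (2*w) * fsum z w (n+1)
      = ∑ q ∈ Finset.range (n+3),
          (if q ≤ n+1 then 2*((n+1+q).choose (n+1-q) : R) * z^q * w^(n+2-q) else 0) := by
    rw [Finset.sum_range_succ, if_neg (by omega), add_zero, fsum, Finset.mul_sum]
    refine Finset.sum_congr rfl fun q hq => ?_
    have hqn : q ≤ n + 1 := by simpa [Nat.lt_succ_iff] using hq
    rw [if_pos hqn]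
    have e : n + 2 - q = (n + 1 - q) + 1 := by omega
    rw [e, pow_add]
    ring
  have expand : (z + 2*w) * fsum z w (n+1)
      = z * fsum z w (n+1) + (2*w) * fsum z w (n+1) := by ring
  rw [expand, hB, hC, hD, fsum, ← Finset.sum_add_distrib, ← Finset.sum_add_distrib]
  refine Finset.sum_congr rfl fun q hq => ?_
  have hq' : q ≤ n + 2 := by simpa [Nat.lt_succ_iff] using hq
  exact pointwise z w n q hq'

private lemma main_id (x y : R) (n : ℕ) :
    x^(2*n+1) + y^(2*n+1) = (x + y) * fsum ((x-y)^2) (x*y) n := by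
  induction n using Nat.strong_induction_on with
  | _ n ih =>
    match n with
    | 0 => simp [fsum]
    | 1 =>
      rw [fsum]
      rw [Finset.sum_range_succ, Finset.sum_range_succ, Finset.sum_range_zero]
      norm_num
      ring
    | (n+2) =>
      have h1 := ih n (by omega)
      have h2 := ih (n+1) (by omega)
      have hrec := fsum_rec ((x-y)^2) (x*y) n
      have hpow : x^(2*(n+2)+1) + y^(2*(n+2)+1)
          = ((x-y)^2 + 2*(x*y)) * (x^(2*(n+1)+1) + y^(2*(n+1)+1))
            - (x*y)^2 * (x^(2*n+1) + y^(2*n+1)) := by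
        have e1 : 2*(n+2)+1 = (2*n+1) + 4 := by omega
        have e2 : 2*(n+1)+1 = (2*n+1) + 2 := by omega
        rw [e1, e2, pow_add, pow_add, pow_add, pow_add]
        ring
      rw [hpow, h1, h2]
      linear_combination (-(x + y)) * hrec

end Generic

/-- For every integer `n ≥ 0`, in `ℤ[T]`:
`(T+1)^(4n+2) + (T-1)^(4n+2)
  = 2(T²+1) · ∑_{q=0}^{n} C(n+q, n-q) (4T)^(2q) (T²-1)^(2n-2q)`. -/
theorem stmt1 (n : ℕ) :
    (X + 1 : ℤ[X]) ^ (4 * n + 2) + (X - 1) ^ (4 * n + 2) =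
      2 * (X ^ 2 + 1) *
        ∑ q ∈ Finset.range (n + 1),
          (C ((n + q).choose (n - q) : ℤ)) * (4 * X) ^ (2 * q) *
            (X ^ 2 - 1) ^ (2 * n - 2 * q) := by
  have h := main_id ((X + 1 : ℤ[X])^2) ((X - 1 : ℤ[X])^2) n
  have e1 : ((X + 1 : ℤ[X])^2)^(2*n+1) = (X+1)^(4*n+2) := by
    rw [← pow_mul]; congr 1; omega
  have e2 : ((X - 1 : ℤ[X])^2)^(2*n+1) = (X-1)^(4*n+2) := by
    rw [← pow_mul]; congr 1; omega
  rw [e1, e2] at h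
  rw [h, fsum]
  have hxy : ((X + 1 : ℤ[X])^2 + (X - 1)^2) = 2 * (X^2 + 1) := by ring
  rw [hxy]
  refine congrArg (HMul.hMul (2 * (X ^ 2 + 1) : ℤ[X])) ?_
  refine Finset.sum_congr rfl fun q hq => ?_
  have hqn : q ≤ n := by simpa [Nat.lt_succ_iff] using hq
  have c1 : (((n+q).choose (n-q) : ℕ) : ℤ[X]) = C ((n + q).choose (n - q) : ℤ) := by
    simp
  rw [c1]
  have c2 : (((X + 1 : ℤ[X])^2 - (X - 1)^2)^2)^q = (4 * X)^(2*q) := by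
    rw [pow_mul]
    congr 1
    ring
  rw [c2]
  have c3 : ((X + 1 : ℤ[X])^2 * (X - 1)^2)^(n-q) = (X^2 - 1)^(2*n - 2*q) := by
    have e : 2*n - 2*q = 2*(n-q) := by omega
    rw [e, pow_mul]
    congr 1
    ring
  rw [c3]
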